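/- Let φ_j : ℝⁿ → ℝ, j = 1,…,N, be differentiable and set φ(x) = (1/N)·Σ_{j=1}^N φ_j(x). Assume φ is L-smooth, φ(x) ≥ φ* for all x ∈ ℝⁿ, and the Strong Growth Condition holds with constant ρ > 0. Fix z⁰ ∈ ℝⁿ, T ∈ ℕ, and η = 1/(ρ·L). For each index sequence σ : {0,…,T−1} → {1,…,N}, define the SGD trajectory z_σ by z_σ(0) = z⁰ and z_σ(t+1) = z_σ(t) − η·∇φ_{σ(t)}(z_σ(t)). Then, averaging uniformly over all N^T index sequences, N^{−T}·Σ_σ Σ_{t=0}^{T−1} ‖∇φ(z_σ(t))‖² ≤ 2·ρ·L·(φ(z⁰) − φ*). -/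

import Mathlib

open scoped RealInnerProductSpace
open intervalIntegral Finset

/-- SGD trajectory: `z 0 = z0`, `z (t+1) = z t - η • ∇φ_{σ t} (z t)`. -/
noncomputable def sgdTraj {n N : ℕ} (φ : Fin N → EuclideanSpace ℝ (Fin n) → ℝ)
    (η : ℝ) (z0 : EuclideanSpace ℝ (Fin n)) (σ : ℕ → Fin N) :
    ℕ → EuclideanSpace ℝ (Fin n)
  | 0 => z0
  | t + 1 => sgdTraj φ η z0 σ t - η • gradient (φ (σ t)) (sgdTraj φ η z0 σ t)

section Aux

lemma descent_lemma {E : Type*} [NormedAddCommGroup E] [InnerProductSpace ℝ E] [CompleteSpace E]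
    {Φ : E → ℝ} (hd : Differentiable ℝ Φ) {L : ℝ} (hL : 0 ≤ L)
    (hLip : ∀ x y, ‖gradient Φ x - gradient Φ y‖ ≤ L * ‖x - y‖) (x y : E) :
    Φ y ≤ Φ x + ⟪gradient Φ x, y - x⟫ + L / 2 * ‖y - x‖ ^ 2 := by
  set v := y - x with hv
  have hgradcont : Continuous (fun z => gradient Φ z) := by
    have : LipschitzWith (Real.toNNReal L) (fun z => gradient Φ z) := by
      apply LipschitzWith.of_dist_le_mul
      intro a b
      simp only [dist_eq_norm, Real.coe_toNNReal L hL]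
      exact hLip a b
    exact this.continuous
  have hg : ∀ s : ℝ, HasDerivAt (fun s : ℝ => Φ (x + s • v))
      (⟪gradient Φ (x + s • v), v⟫) s := by
    intro s
    have hline : HasDerivAt (fun s : ℝ => x + s • v) v s := by
      simpa using ((hasDerivAt_id s).smul_const v).const_add x
    have hΦ : HasFDerivAt Φ ((InnerProductSpace.toDual ℝ E) (gradient Φ (x + s • v)))
        (x + s • v) := (hd _).hasGradientAt.hasFDerivAt
    exact hΦ.comp_hasDerivAt s hline
  have hcont : Continuous (fun s : ℝ => ⟪gradient Φ (x + s • v), v⟫) := by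
    exact (hgradcont.comp (by continuity)).inner continuous_const
  have hint : IntervalIntegrable (fun s : ℝ => ⟪gradient Φ (x + s • v), v⟫)
      MeasureTheory.volume 0 1 := hcont.intervalIntegrable 0 1
  have hftc : ∫ s in (0:ℝ)..1, ⟪gradient Φ (x + s • v), v⟫ = Φ y - Φ x := by
    have := integral_eq_sub_of_hasDerivAt (f := fun s : ℝ => Φ (x + s • v))
      (fun s _ => hg s) hint
    simpa [hv] using this
  have hmono : ∫ s in (0:ℝ)..1, (⟪gradient Φ (x + s • v), v⟫ - ⟪gradient Φ x, v⟫)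
      ≤ ∫ s in (0:ℝ)..1, L * ‖v‖ ^ 2 * s := by
    apply integral_mono_on (by norm_num)
      (hint.sub (intervalIntegrable_const))
      (((continuous_const.mul continuous_id).intervalIntegrable 0 1))
    intro s hs
    have h1 : ⟪gradient Φ (x + s • v), v⟫ - ⟪gradient Φ x, v⟫
        = ⟪gradient Φ (x + s • v) - gradient Φ x, v⟫ := (inner_sub_left _ _ _).symm
    rw [h1]
    calc ⟪gradient Φ (x + s • v) - gradient Φ x, v⟫
        ≤ ‖gradient Φ (x + s • v) - gradient Φ x‖ * ‖v‖ := real_inner_le_norm _ _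
      _ ≤ (L * ‖(x + s • v) - x‖) * ‖v‖ := by
          gcongr; exact hLip _ _
      _ = L * ‖v‖ ^ 2 * s := by
          have : ‖(x + s • v) - x‖ = s * ‖v‖ := by
            simp [norm_smul, abs_of_nonneg hs.1]
          rw [this]; ring
  have hconst : ∫ s in (0:ℝ)..1, (⟪gradient Φ (x + s • v), v⟫ - ⟪gradient Φ x, v⟫)
      = (Φ y - Φ x) - ⟪gradient Φ x, v⟫ := by
    rw [integral_sub hint intervalIntegrable_const, hftc]
    simp
  have hval : ∫ s in (0:ℝ)..1, L * ‖v‖ ^ 2 * s = L / 2 * ‖v‖ ^ 2 := by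
    rw [integral_const_mul]
    simp [integral_id]
    ring
  rw [hconst, hval] at hmono
  linarith

variable {n N : ℕ}

/-- Expected value of `Φ` after `t` SGD steps starting at `x`. -/
noncomputable def expPhi (φ : Fin N → EuclideanSpace ℝ (Fin n) → ℝ)
    (Φ : EuclideanSpace ℝ (Fin n) → ℝ) (η : ℝ) : ℕ → EuclideanSpace ℝ (Fin n) → ℝ
  | 0 => Φ
  | t + 1 => fun x => (1 / N : ℝ) * ∑ j, expPhi φ Φ η t (x - η • gradient (φ j) x)

/-- Expected sum of squared gradient norms along `t` SGD steps starting at `x`. -/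
noncomputable def expS (φ : Fin N → EuclideanSpace ℝ (Fin n) → ℝ)
    (Φ : EuclideanSpace ℝ (Fin n) → ℝ) (η : ℝ) : ℕ → EuclideanSpace ℝ (Fin n) → ℝ
  | 0 => fun _ => 0
  | t + 1 => fun x => ‖gradient Φ x‖ ^ 2 +
      (1 / N : ℝ) * ∑ j, expS φ Φ η t (x - η • gradient (φ j) x)

lemma gradient_avg (φ : Fin N → EuclideanSpace ℝ (Fin n) → ℝ)
    (hφj : ∀ j, Differentiable ℝ (φ j)) (x : EuclideanSpace ℝ (Fin n)) :
    gradient (fun x => (1 / N : ℝ) * ∑ j, φ j x) x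
      = (1 / N : ℝ) • ∑ j, gradient (φ j) x := by
  have h := (HasFDerivAt.sum (fun j (_ : j ∈ Finset.univ) =>
      (hφj j x).hasFDerivAt)).const_mul (1 / N : ℝ)
  have h2 := h.hasGradientAt
  have h3 : (InnerProductSpace.toDual ℝ (EuclideanSpace ℝ (Fin n))).symm
      ((1 / N : ℝ) • ∑ j, fderiv ℝ (φ j) x) = (1 / N : ℝ) • ∑ j, gradient (φ j) x := by
    simp [gradient, map_smul, map_sum]
  rw [h3] at h2
  simpa only [Finset.sum_apply] using h2.gradient

lemma sgdTraj_congr (φ : Fin N → EuclideanSpace ℝ (Fin n) → ℝ) (η : ℝ)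
    (z0 : EuclideanSpace ℝ (Fin n)) :
    ∀ (t : ℕ) (σ σ' : ℕ → Fin N), (∀ s, s < t → σ s = σ' s) →
      sgdTraj φ η z0 σ t = sgdTraj φ η z0 σ' t := by
  intro t
  induction t with
  | zero => intro σ σ' _; rfl
  | succ t ih =>
    intro σ σ' h
    have h1 := ih σ σ' (fun s hs => h s (Nat.lt_succ_of_lt hs))
    simp only [sgdTraj, h1, h t (Nat.lt_succ_self t)]

lemma sgdTraj_shift (φ : Fin N → EuclideanSpace ℝ (Fin n) → ℝ) (η : ℝ)
    (z0 : EuclideanSpace ℝ (Fin n)) (σ : ℕ → Fin N) :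
    ∀ t : ℕ, sgdTraj φ η z0 σ (t + 1)
      = sgdTraj φ η (z0 - η • gradient (φ (σ 0)) z0) (fun s => σ (s + 1)) t := by
  intro t
  induction t with
  | zero => rfl
  | succ t ih =>
    have h : sgdTraj φ η z0 σ (t + 1 + 1) = sgdTraj φ η z0 σ (t + 1)
        - η • gradient (φ (σ (t + 1))) (sgdTraj φ η z0 σ (t + 1)) := rfl
    rw [h, ih]
    rfl

lemma comb (hN : 0 < N) (φ : Fin N → EuclideanSpace ℝ (Fin n) → ℝ)
    (Φ : EuclideanSpace ℝ (Fin n) → ℝ) (η : ℝ) :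
    ∀ (T : ℕ) (x : EuclideanSpace ℝ (Fin n)),
      ∑ σ : Fin T → Fin N, ∑ t ∈ Finset.range T,
        ‖gradient Φ (sgdTraj φ η x (fun s => if h : s < T then σ ⟨s, h⟩ else ⟨0, hN⟩) t)‖ ^ 2
      = (N : ℝ) ^ T * expS φ Φ η T x := by
  intro T
  induction T with
  | zero => intro x; simp [expS]
  | succ T ih =>
    intro x
    have hN0 : (N : ℝ) ≠ 0 := Nat.cast_ne_zero.mpr hN.ne'
    rw [← Equiv.sum_comp (Fin.consEquiv (fun _ : Fin (T + 1) => Fin N))]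
    rw [Fintype.sum_prod_type]
    have hinner : ∀ (j : Fin N) (τ : Fin T → Fin N),
        ∑ t ∈ Finset.range (T + 1),
          ‖gradient Φ (sgdTraj φ η x
            (fun s => if h : s < T + 1 then Fin.cons (α := fun _ => Fin N) j τ ⟨s, h⟩ else ⟨0, hN⟩) t)‖ ^ 2
        = ‖gradient Φ x‖ ^ 2 + ∑ t ∈ Finset.range T,
            ‖gradient Φ (sgdTraj φ η (x - η • gradient (φ j) x)
              (fun s => if h : s < T then τ ⟨s, h⟩ else ⟨0, hN⟩) t)‖ ^ 2 := by
      intro j τ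
      rw [Finset.sum_range_succ']
      have h0 : sgdTraj φ η x
          (fun s => if h : s < T + 1 then Fin.cons (α := fun _ => Fin N) j τ ⟨s, h⟩ else ⟨0, hN⟩) 0 = x := rfl
      rw [h0, add_comm]
      congr 1
      apply Finset.sum_congr rfl
      intro t ht
      have htT : t < T := Finset.mem_range.mp ht
      congr 1
      rw [sgdTraj_shift]
      have e0 : (if h : 0 < T + 1 then Fin.cons (α := fun _ => Fin N) j τ ⟨0, h⟩ else ⟨0, hN⟩) = j := by
        simp
      rw [e0]
      congr 2
      apply sgdTraj_congr
      intro s hs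
      have hs1 : s + 1 < T + 1 := by omega
      have hsT : s < T := by omega
      simp only [dif_pos hs1, dif_pos hsT]
      have : (⟨s + 1, hs1⟩ : Fin (T + 1)) = Fin.succ ⟨s, hsT⟩ := rfl
      rw [this, Fin.cons_succ]
    calc ∑ j : Fin N, ∑ τ : Fin T → Fin N, ∑ t ∈ Finset.range (T + 1),
          ‖gradient Φ (sgdTraj φ η x
            (fun s => if h : s < T + 1 then (Fin.consEquiv fun _ => Fin N) (j, τ) ⟨s, h⟩
              else ⟨0, hN⟩) t)‖ ^ 2
        = ∑ j : Fin N, ∑ τ : Fin T → Fin N, (‖gradient Φ x‖ ^ 2 + ∑ t ∈ Finset.range T,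
            ‖gradient Φ (sgdTraj φ η (x - η • gradient (φ j) x)
              (fun s => if h : s < T then τ ⟨s, h⟩ else ⟨0, hN⟩) t)‖ ^ 2) := by
          apply Finset.sum_congr rfl; intro j _
          apply Finset.sum_congr rfl; intro τ _
          exact hinner j τ
      _ = ∑ j : Fin N, ((N : ℝ) ^ T * ‖gradient Φ x‖ ^ 2
            + (N : ℝ) ^ T * expS φ Φ η T (x - η • gradient (φ j) x)) := by
          apply Finset.sum_congr rfl; intro j _
          rw [Finset.sum_add_distrib, Finset.sum_const, ih (x - η • gradient (φ j) x),
            Finset.card_univ, Fintype.card_fun, Fintype.card_fin, Fintype.card_fin,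
            nsmul_eq_mul, Nat.cast_pow]
      _ = (N : ℝ) ^ (T + 1) * expS φ Φ η (T + 1) x := by
          rw [Finset.sum_add_distrib, Finset.sum_const, Finset.card_univ, Fintype.card_fin,
            ← Finset.mul_sum]
          show _ = (N : ℝ) ^ (T + 1) * (‖gradient Φ x‖ ^ 2 + (1 / N : ℝ) * _)
          rw [nsmul_eq_mul]
          field_simp
          ring

end Aux

theorem stmt5 {n N : ℕ} (hN : 0 < N)
    (φ : Fin N → EuclideanSpace ℝ (Fin n) → ℝ) (hφj : ∀ j, Differentiable ℝ (φ j))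
    (Φ : EuclideanSpace ℝ (Fin n) → ℝ) (hΦ : Φ = fun x => (1 / N : ℝ) * ∑ j, φ j x)
    (L : ℝ) (hL : 0 < L) (hΦsmooth : ContDiff ℝ 1 Φ)
    (hΦLip : ∀ x y, ‖gradient Φ x - gradient Φ y‖ ≤ L * ‖x - y‖)
    (φstar : ℝ) (hbound : ∀ x, φstar ≤ Φ x)
    (ρ : ℝ) (hρ : 0 < ρ)
    (hSGC : ∀ x, (1 / N : ℝ) * ∑ j, ‖gradient (φ j) x‖ ^ 2 ≤ ρ * ‖gradient Φ x‖ ^ 2)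
    (z0 : EuclideanSpace ℝ (Fin n)) (T : ℕ)
    (η : ℝ) (hη : η = 1 / (ρ * L)) :
    ((N : ℝ) ^ T)⁻¹ *
      ∑ σ : Fin T → Fin N, ∑ t ∈ Finset.range T,
        ‖gradient Φ
          (sgdTraj φ η z0 (fun s => if h : s < T then σ ⟨s, h⟩ else ⟨0, hN⟩) t)‖ ^ 2 ≤
      2 * ρ * L * (Φ z0 - φstar) := by
  have hN0 : (N : ℝ) ≠ 0 := Nat.cast_ne_zero.mpr hN.ne'
  have hNpos : (0 : ℝ) < N := Nat.cast_pos.mpr hN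
  have hηpos : 0 < η := by rw [hη]; positivity
  have hdΦ : Differentiable ℝ Φ := hΦsmooth.differentiable one_ne_zero
  -- gradient of the average
  have hgrad : ∀ x, gradient Φ x = (1 / N : ℝ) • ∑ j, gradient (φ j) x := by
    intro x; rw [hΦ]; exact gradient_avg φ hφj x
  -- one-step expected descent
  have onestep : ∀ x : EuclideanSpace ℝ (Fin n),
      (1 / N : ℝ) * ∑ j, Φ (x - η • gradient (φ j) x)
        ≤ Φ x - η / 2 * ‖gradient Φ x‖ ^ 2 := by
    intro x
    have hdesc : ∀ j, Φ (x - η • gradient (φ j) x)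
        ≤ Φ x - η * ⟪gradient Φ x, gradient (φ j) x⟫
          + L / 2 * η ^ 2 * ‖gradient (φ j) x‖ ^ 2 := by
      intro j
      have h := descent_lemma hdΦ hL.le hΦLip x (x - η • gradient (φ j) x)
      have h2 : (x - η • gradient (φ j) x) - x = -(η • gradient (φ j) x) := by abel
      rw [h2] at h
      have h3 : ⟪gradient Φ x, -(η • gradient (φ j) x)⟫
          = -(η * ⟪gradient Φ x, gradient (φ j) x⟫) := by
        rw [inner_neg_right, real_inner_smul_right]
      have h4 : ‖-(η • gradient (φ j) x)‖ ^ 2 = η ^ 2 * ‖gradient (φ j) x‖ ^ 2 := by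
        rw [norm_neg, norm_smul, mul_pow, Real.norm_eq_abs, sq_abs]
      rw [h3, h4] at h
      calc Φ (x - η • gradient (φ j) x)
          ≤ Φ x + -(η * ⟪gradient Φ x, gradient (φ j) x⟫)
            + L / 2 * (η ^ 2 * ‖gradient (φ j) x‖ ^ 2) := h
        _ = Φ x - η * ⟪gradient Φ x, gradient (φ j) x⟫
            + L / 2 * η ^ 2 * ‖gradient (φ j) x‖ ^ 2 := by ring
    have hinner : (1 / N : ℝ) * ∑ j, ⟪gradient Φ x, gradient (φ j) x⟫
        = ‖gradient Φ x‖ ^ 2 := by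
      rw [← inner_sum, ← real_inner_smul_right, ← hgrad x, real_inner_self_eq_norm_sq]
    have hρL : η * (ρ * L) = 1 := by
      rw [hη]; field_simp
    calc (1 / N : ℝ) * ∑ j, Φ (x - η • gradient (φ j) x)
        ≤ (1 / N : ℝ) * ∑ j, (Φ x - η * ⟪gradient Φ x, gradient (φ j) x⟫
            + L / 2 * η ^ 2 * ‖gradient (φ j) x‖ ^ 2) := by
          apply mul_le_mul_of_nonneg_left (Finset.sum_le_sum fun j _ => hdesc j)
          positivity
      _ = Φ x - η * ((1 / N : ℝ) * ∑ j, ⟪gradient Φ x, gradient (φ j) x⟫)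
            + L / 2 * η ^ 2 * ((1 / N : ℝ) * ∑ j, ‖gradient (φ j) x‖ ^ 2) := by
          rw [Finset.sum_add_distrib, Finset.sum_sub_distrib, Finset.sum_const,
            Finset.card_univ, Fintype.card_fin, nsmul_eq_mul, ← Finset.mul_sum,
            ← Finset.mul_sum]
          field_simp
      _ ≤ Φ x - η * ‖gradient Φ x‖ ^ 2
            + L / 2 * η ^ 2 * (ρ * ‖gradient Φ x‖ ^ 2) := by
          rw [hinner]
          have := hSGC x
          have hc : (0:ℝ) ≤ L / 2 * η ^ 2 := by positivity
          nlinarith [mul_le_mul_of_nonneg_left this hc]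
      _ = Φ x - η / 2 * ‖gradient Φ x‖ ^ 2 := by
          linear_combination (η / 2 * ‖gradient Φ x‖ ^ 2) * hρL
  -- main inductive inequality
  have hmain : ∀ (t : ℕ) (x : EuclideanSpace ℝ (Fin n)),
      expPhi φ Φ η t x + η / 2 * expS φ Φ η t x ≤ Φ x := by
    intro t
    induction t with
    | zero => intro x; simp [expPhi, expS]
    | succ t ih =>
      intro x
      calc expPhi φ Φ η (t + 1) x + η / 2 * expS φ Φ η (t + 1) x
          = (1 / N : ℝ) * ∑ j, (expPhi φ Φ η t (x - η • gradient (φ j) x)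
              + η / 2 * expS φ Φ η t (x - η • gradient (φ j) x))
            + η / 2 * ‖gradient Φ x‖ ^ 2 := by
            show (1 / N : ℝ) * ∑ j, expPhi φ Φ η t _ + η / 2 * (‖gradient Φ x‖ ^ 2
              + (1 / N : ℝ) * ∑ j, expS φ Φ η t _) = _
            rw [Finset.sum_add_distrib, ← Finset.mul_sum]
            ring
        _ ≤ (1 / N : ℝ) * ∑ j, Φ (x - η • gradient (φ j) x)
            + η / 2 * ‖gradient Φ x‖ ^ 2 := by
            apply add_le_add_left
            apply mul_le_mul_of_nonneg_left (Finset.sum_le_sum fun j _ => ih _)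
            positivity
        _ ≤ (Φ x - η / 2 * ‖gradient Φ x‖ ^ 2) + η / 2 * ‖gradient Φ x‖ ^ 2 :=
            add_le_add_left (onestep x) _
        _ = Φ x := by ring
  -- lower bound on expPhi
  have hlow : ∀ (t : ℕ) (x : EuclideanSpace ℝ (Fin n)), φstar ≤ expPhi φ Φ η t x := by
    intro t
    induction t with
    | zero => intro x; exact hbound x
    | succ t ih =>
      intro x
      show φstar ≤ (1 / N : ℝ) * ∑ j, expPhi φ Φ η t (x - η • gradient (φ j) x)
      have hs : (N : ℝ) * φstar ≤ ∑ j, expPhi φ Φ η t (x - η • gradient (φ j) x) := by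
        calc (N : ℝ) * φstar = ∑ _j : Fin N, φstar := by
              rw [Finset.sum_const, Finset.card_univ, Fintype.card_fin, nsmul_eq_mul]
          _ ≤ _ := Finset.sum_le_sum fun j _ => ih _
      calc φstar = (1 / N : ℝ) * ((N : ℝ) * φstar) := by field_simp
        _ ≤ _ := mul_le_mul_of_nonneg_left hs (by positivity)
  -- assemble
  rw [comb hN φ Φ η T z0, ← mul_assoc, inv_mul_cancel₀ (by positivity), one_mul]
  have h1 : η / 2 * expS φ Φ η T z0 ≤ Φ z0 - φstar := by
    have := hmain T z0
    have := hlow T z0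
    linarith
  have hρL : η * (ρ * L) = 1 := by rw [hη]; field_simp
  have h2 := mul_le_mul_of_nonneg_left h1 (show (0:ℝ) ≤ 2 * ρ * L by positivity)
  calc expS φ Φ η T z0 = 2 * ρ * L * (η / 2 * expS φ Φ η T z0) := by
        linear_combination (-(expS φ Φ η T z0)) * hρL
    _ ≤ 2 * ρ * L * (Φ z0 - φstar) := h2
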